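/- Suppose G is a connected simple graph containing adjacent vertices i and j, each of degree at most 4, such that (i,j) is the smallest edge incident to i in the order <_i. Then, for the Superfast Encoding, at least one of the two Pauli operators Ã_{i,j} and Ã_{i,j} B̃_j has weight at most 2. Consequently, if all vertices of G have degree at most 4, the Superfast Encoding stabilizer code fails to correct all single-qubit errors, for every choice of edge orderings and orientations. -/

import Mathlib

open Matrix

/-- Labels for single-qubit Pauli matrices. -/
inductive P1 : Type
  | I : P1
  | X : P1
  | Y : P1
  | Z : P1
deriving DecidableEq

/-- The matrix entries of a single-qubit Pauli matrix, with the qubit basis indexed by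
`Bool` (`false = |0⟩`, `true = |1⟩`). -/
def P1.entry : P1 → Bool → Bool → ℂ
  | P1.I, a, b => if a = b then 1 else 0
  | P1.X, a, b => if a = b then 0 else 1
  | P1.Y, a, b => if a = b then 0 else if a then Complex.I else -Complex.I
  | P1.Z, a, b => if a = b then (if a then -1 else 1) else 0

/-- The multi-qubit Pauli matrix `⨂_{q ∈ Q} P_{f q}` on the qubits indexed by `Q`,
acting on `(ℂ²)^{⊗Q}` (whose standard basis is indexed by `Q → Bool`). -/
noncomputable def PauliMatrix {Q : Type*} [Fintype Q] (f : Q → P1) :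
    Matrix (Q → Bool) (Q → Bool) ℂ :=
  Matrix.of fun a b => ∏ q, (f q).entry (a q) (b q)

/-- The weight of a Pauli operator: the number of qubits on which it acts nontrivially. -/
noncomputable def pweight {Q : Type*} [Fintype Q] (f : Q → P1) : ℕ :=
  (Finset.univ.filter fun q => f q ≠ P1.I).card

namespace Aux

open P1

def pmul : P1 → P1 → P1
  | I, p => p
  | p, I => p
  | X, X => I
  | Y, Y => I
  | Z, Z => I
  | X, Y => Z
  | Y, X => Z
  | Y, Z => X
  | Z, Y => X
  | Z, X => Y
  | X, Z => Y

def pphase : P1 → P1 → ℂ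
  | X, Y => Complex.I
  | Y, X => -Complex.I
  | Y, Z => Complex.I
  | Z, Y => -Complex.I
  | Z, X => Complex.I
  | X, Z => -Complex.I
  | _, _ => 1

lemma pmul_comm (p q : P1) : pmul p q = pmul q p := by cases p <;> cases q <;> rfl

lemma pmul_self (p : P1) : pmul p p = I := by cases p <;> rfl

lemma pphase_self (p : P1) : pphase p p = 1 := by cases p <;> rfl

lemma pphase_ne_zero (p q : P1) : pphase p q ≠ 0 := by
  cases p <;> cases q <;> simp [pphase, Complex.I_ne_zero]

def psign (p q : P1) : ℂ := if p ≠ I ∧ q ≠ I ∧ p ≠ q then -1 else 1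

lemma pphase_comm (p q : P1) : pphase p q = psign p q * pphase q p := by
  cases p <;> cases q <;> simp [pphase, psign] <;> ring

lemma entry_mul (p q : P1) (a b : Bool) :
    ∑ c : Bool, p.entry a c * q.entry c b = pphase p q * (pmul p q).entry a b := by
  cases p <;> cases q <;> cases a <;> cases b <;>
    simp [P1.entry, pmul, pphase, Fintype.sum_bool] <;> ring

lemma PauliMatrix_mul {Q : Type*} [Fintype Q] [DecidableEq Q] (f g : Q → P1) :
    PauliMatrix f * PauliMatrix g =
      (∏ q, pphase (f q) (g q)) • PauliMatrix (fun q => pmul (f q) (g q)) := by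
  ext a b
  simp only [Matrix.mul_apply, PauliMatrix, Matrix.of_apply, Matrix.smul_apply,
    smul_eq_mul]
  have h1 : ∀ c : Q → Bool,
      (∏ q, (f q).entry (a q) (c q)) * ∏ q, (g q).entry (c q) (b q)
        = ∏ q, ((f q).entry (a q) (c q) * (g q).entry (c q) (b q)) :=
    fun c => (Finset.prod_mul_distrib).symm
  simp only [h1]
  rw [← Fintype.prod_sum (fun q (x : Bool) => (f q).entry (a q) x * (g q).entry x (b q))]
  rw [← Finset.prod_mul_distrib]
  exact Finset.prod_congr rfl fun q _ => entry_mul (f q) (g q) (a q) (b q)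

lemma PauliMatrix_one {Q : Type*} [Fintype Q] :
    PauliMatrix (fun _ : Q => P1.I) = 1 := by
  ext a b
  simp only [PauliMatrix, Matrix.of_apply, Matrix.one_apply, P1.entry]
  by_cases h : a = b
  · subst h; simp
  · rw [if_neg h]
    obtain ⟨q, hq⟩ := Function.ne_iff.mp h
    exact Finset.prod_eq_zero (Finset.mem_univ q) (by simp [hq])

lemma PauliMatrix_sq {Q : Type*} [Fintype Q] [DecidableEq Q] (f : Q → P1) :
    PauliMatrix f * PauliMatrix f = 1 := by
  rw [PauliMatrix_mul]
  simp [pphase_self, pmul_self, PauliMatrix_one]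

lemma PauliMatrix_ne_zero {Q : Type*} [Fintype Q] [DecidableEq Q] (f : Q → P1) :
    PauliMatrix f ≠ 0 := by
  intro h
  have := PauliMatrix_sq f
  rw [h, zero_mul] at this
  have h2 := Matrix.ext_iff.mpr this.symm (fun _ => false) (fun _ => false)
  rw [Matrix.one_apply_eq, Matrix.zero_apply] at h2
  exact one_ne_zero h2

lemma PauliMatrix_comm {Q : Type*} [Fintype Q] [DecidableEq Q] (f g : Q → P1) :
    PauliMatrix f * PauliMatrix g =
      (∏ q, psign (f q) (g q)) • (PauliMatrix g * PauliMatrix f) := by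
  rw [PauliMatrix_mul f g, PauliMatrix_mul g f]
  have : (fun q => pmul (f q) (g q)) = fun q => pmul (g q) (f q) := by
    funext q; exact pmul_comm _ _
  rw [this, smul_smul, ← Finset.prod_mul_distrib]
  congr 1
  exact Finset.prod_congr rfl fun q _ => pphase_comm (f q) (g q)

end Aux

section SuperfastEncoding

variable {V : Type*} [Fintype V] [DecidableEq V] (G : SimpleGraph V) [DecidableRel G.Adj]

/-- The vertex operator `B̃_j = ∏_{k : (j,k) ∈ E} Z_{jk}` of the Superfast Encoding:
Pauli `Z` on every qubit (edge) incident to the vertex `j`. -/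
noncomputable def BtSF (j : V) :
    Matrix (↥G.edgeSet → Bool) (↥G.edgeSet → Bool) ℂ :=
  PauliMatrix fun e => if j ∈ (e : Sym2 V) then P1.Z else P1.I

/-- The edge operator
`Ã_{jk} = ε_{jk} X_{jk} ∏_{(j,p) <_j (j,k)} Z_{jp} ∏_{(k,q) <_k (k,j)} Z_{kq}`
of the Superfast Encoding.  The linear order `<_i` on the edges incident to `i` is
represented by a ranking function `rank i : Sym2 V → ℕ`, injective on incident edges. -/
noncomputable def AtSF (rank : V → Sym2 V → ℕ) (eps : V → V → ℂ) (j k : V) :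
    Matrix (↥G.edgeSet → Bool) (↥G.edgeSet → Bool) ℂ :=
  eps j k • PauliMatrix fun e : ↥G.edgeSet =>
    if (e : Sym2 V) = s(j, k) then P1.X
    else if (j ∈ (e : Sym2 V) ∧ rank j (e : Sym2 V) < rank j s(j, k)) ∨
            (k ∈ (e : Sym2 V) ∧ rank k (e : Sym2 V) < rank k s(j, k)) then P1.Z
    else P1.I

/-- `ζ(0), …, ζ(s) = ζ(0)` is a closed loop in `G`. -/
def IsLoopIn (s : ℕ) (ζ : ℕ → V) : Prop :=
  ζ s = ζ 0 ∧ ∀ t < s, G.Adj (ζ t) (ζ (t + 1))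

/-- The loop operator `Ã(ζ) = i^s Ã_{ζ(0)ζ(1)} ⋯ Ã_{ζ(s-1)ζ(0)}`. -/
noncomputable def loopOpSF (rank : V → Sym2 V → ℕ) (eps : V → V → ℂ)
    (s : ℕ) (ζ : ℕ → V) : Matrix (↥G.edgeSet → Bool) (↥G.edgeSet → Bool) ℂ :=
  (Complex.I ^ s) •
    (((List.range s).map (fun t => AtSF G rank eps (ζ t) (ζ (t + 1)))).prod)

/-- The stabilizer group `S` generated by all loop operators (as a submonoid of the
matrix algebra; every loop operator is an involution, so this is a group). -/
noncomputable def stabSF (rank : V → Sym2 V → ℕ) (eps : V → V → ℂ) :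
    Submonoid (Matrix (↥G.edgeSet → Bool) (↥G.edgeSet → Bool) ℂ) :=
  Submonoid.closure {M | ∃ s ζ, IsLoopIn G s ζ ∧ M = loopOpSF G rank eps s ζ}

/-- A Pauli operator `c • PauliMatrix f` is a logical operator of the code: it commutes
with every element of the stabilizer group `S` and is not proportional to any element
of `S`. -/
def IsLogicalSF (rank : V → Sym2 V → ℕ) (eps : V → V → ℂ) (c : ℂ) (f : ↥G.edgeSet → P1) :
    Prop :=
  (∀ M ∈ stabSF G rank eps, (c • PauliMatrix f) * M = M * (c • PauliMatrix f)) ∧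
  ¬ ∃ (c' : ℂ) (M : Matrix (↥G.edgeSet → Bool) (↥G.edgeSet → Bool) ℂ),
      M ∈ stabSF G rank eps ∧ c • PauliMatrix f = c' • M

end SuperfastEncoding

namespace Aux

open P1

variable {V : Type*} [Fintype V] [DecidableEq V] (G : SimpleGraph V) [DecidableRel G.Adj]

/-- The Pauli string of the edge operator. -/
def fAf (rank : V → Sym2 V → ℕ) (j k : V) : ↥G.edgeSet → P1 := fun e =>
  if (e : Sym2 V) = s(j, k) then P1.X
  else if (j ∈ (e : Sym2 V) ∧ rank j (e : Sym2 V) < rank j s(j, k)) ∨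
          (k ∈ (e : Sym2 V) ∧ rank k (e : Sym2 V) < rank k s(j, k)) then P1.Z
  else P1.I

/-- The Pauli string of the vertex operator. -/
def fBf (j : V) : ↥G.edgeSet → P1 := fun e => if j ∈ (e : Sym2 V) then P1.Z else P1.I

lemma AtSF_eq (rank : V → Sym2 V → ℕ) (eps : V → V → ℂ) (j k : V) :
    AtSF G rank eps j k = eps j k • PauliMatrix (fAf G rank j k) := rfl

lemma BtSF_eq (j : V) : BtSF G j = PauliMatrix (fBf G j) := rfl

lemma fAf_swap (rank : V → Sym2 V → ℕ) (j k : V) :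
    fAf G rank j k = fAf G rank k j := by
  funext e
  have hs : s(k, j) = s(j, k) := Sym2.eq_swap
  simp only [fAf, hs]
  exact if_congr Iff.rfl rfl (if_congr or_comm rfl rfl)

lemma fAf_ZI (rank : V → Sym2 V → ℕ) {j k : V} {e : ↥G.edgeSet}
    (hne : (e : Sym2 V) ≠ s(j, k)) :
    fAf G rank j k e = P1.Z ∨ fAf G rank j k e = P1.I := by
  unfold fAf
  rw [if_neg hne]
  split <;> simp

lemma fBf_ZI (j : V) (e : ↥G.edgeSet) :
    fBf G j e = P1.Z ∨ fBf G j e = P1.I := by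
  unfold fBf; split <;> simp

lemma psign_ZI {p q : P1} (hp : p = P1.Z ∨ p = P1.I) (hq : q = P1.Z ∨ q = P1.I) :
    psign p q = 1 := by
  rcases hp with hp | hp <;> rcases hq with hq | hq <;> subst hp <;> subst hq <;>
    simp [psign]

lemma psign_self (p : P1) : psign p p = 1 := by simp [psign]

variable (rank : V → Sym2 V → ℕ)

lemma stepA_one {i j l m : V} (hadj : G.Adj i j)
    (hrankj : Set.InjOn (rank j) {e : Sym2 V | e ∈ G.edgeSet ∧ j ∈ e})
    (hmin : ∀ e ∈ G.edgeSet, i ∈ e → e ≠ s(i, j) → rank i s(i, j) < rank i e)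
    (hl : l = i ∨ l = j) (hm : ¬(m = i ∨ m = j)) (hlm : G.Adj l m) :
    ∏ e : ↥G.edgeSet, psign (fAf G rank i j e) (fAf G rank l m e) = -1 := by
  push_neg at hm
  obtain ⟨hmi, hmj⟩ := hm
  have he0 : s(i, j) ∈ G.edgeSet := G.mem_edgeSet.mpr hadj
  set e0 : ↥G.edgeSet := ⟨s(i, j), he0⟩ with he0def
  rcases hl with rfl | rfl
  · -- l = i
    have hmi' : l ≠ m := hlm.ne
    have hne_edges : s(l, j) ≠ s(l, m) := by
      intro h
      rcases Sym2.eq_iff.mp h with ⟨_, h2⟩ | ⟨h1, _⟩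
      · exact hmj h2.symm
      · exact hmi' h1
    have hedm : s(l, m) ∈ G.edgeSet := G.mem_edgeSet.mpr hlm
    rw [Finset.prod_eq_single_of_mem e0 (Finset.mem_univ e0) ?_]
    · have h1 : fAf G rank l j e0 = P1.X := if_pos rfl
      have h2 : fAf G rank l m e0 = P1.Z := by
        simp only [fAf]
        rw [if_neg hne_edges, if_pos (Or.inl ⟨(show l ∈ ((e0 : ↥G.edgeSet) : Sym2 V) from Sym2.mem_mk_left _ _),
          hmin _ hedm (by simp [Sym2.mem_iff]) (Ne.symm hne_edges)⟩)]
      rw [h1, h2]; simp [psign]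
    · intro e _ hne
      have hval : (e : Sym2 V) ≠ s(l, j) := fun h => hne (Subtype.ext h)
      by_cases he : (e : Sym2 V) = s(l, m)
      · have hX : fAf G rank l m e = P1.X := if_pos he
        have hI : fAf G rank l j e = P1.I := by
          simp only [fAf]
          rw [if_neg hval, if_neg]
          rintro (⟨h1, h2⟩ | ⟨h1, h2⟩)
          · exact absurd h2 (not_lt.mpr (le_of_lt (hmin _ e.prop h1 hval)))
          · rw [he] at h1
            rcases Sym2.mem_iff.mp h1 with h | h
            · exact hadj.ne' h
            · exact hmj h.symm
        rw [hI, hX]; simp [psign]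
      · exact psign_ZI (fAf_ZI G rank hval) (fAf_ZI G rank he)
  · -- l = j
    have hmj' : l ≠ m := hlm.ne
    have hedm : s(l, m) ∈ G.edgeSet := G.mem_edgeSet.mpr hlm
    have hne2 : s(i, l) ≠ s(l, m) := by
      intro h
      rcases Sym2.eq_iff.mp h with ⟨h1, _⟩ | ⟨h1, _⟩
      · exact hadj.ne h1
      · exact hmi h1.symm
    have hr : rank l s(i, l) ≠ rank l s(l, m) := by
      intro h
      exact hne2 (hrankj ⟨he0, by simp [Sym2.mem_iff]⟩ ⟨hedm, by simp [Sym2.mem_iff]⟩ h)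
    by_cases hC : rank l s(i, l) < rank l s(l, m)
    · rw [Finset.prod_eq_single_of_mem e0 (Finset.mem_univ e0) ?_]
      · have h1 : fAf G rank i l e0 = P1.X := if_pos rfl
        have h2 : fAf G rank l m e0 = P1.Z := by
          simp only [fAf]
          rw [if_neg hne2, if_pos (Or.inl ⟨(show l ∈ ((e0 : ↥G.edgeSet) : Sym2 V) from Sym2.mem_mk_right _ _), hC⟩)]
        rw [h1, h2]; simp [psign]
      · intro e _ hne
        have hval : (e : Sym2 V) ≠ s(i, l) := fun h => hne (Subtype.ext h)
        by_cases he : (e : Sym2 V) = s(l, m)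
        · have hX : fAf G rank l m e = P1.X := if_pos he
          have hI : fAf G rank i l e = P1.I := by
            simp only [fAf]
            rw [if_neg hval, if_neg]
            rintro (⟨h1, h2⟩ | ⟨h1, h2⟩)
            · exact absurd h2 (not_lt.mpr (le_of_lt (hmin _ e.prop h1 hval)))
            · rw [he] at h2
              exact absurd hC (not_lt.mpr (le_of_lt h2))
          rw [hI, hX]; simp [psign]
        · exact psign_ZI (fAf_ZI G rank hval) (fAf_ZI G rank he)
    · have hC' : rank l s(l, m) < rank l s(i, l) :=
        lt_of_le_of_ne (not_lt.mp hC) (Ne.symm hr)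
      rw [Finset.prod_eq_single_of_mem (⟨s(l, m), hedm⟩ : ↥G.edgeSet)
        (Finset.mem_univ _) ?_]
      · have h1 : fAf G rank i l (⟨s(l, m), hedm⟩ : ↥G.edgeSet) = P1.Z := by
          simp only [fAf]
          rw [if_neg (Ne.symm hne2), if_pos (Or.inr ⟨by simp [Sym2.mem_iff], hC'⟩)]
        have h2 : fAf G rank l m (⟨s(l, m), hedm⟩ : ↥G.edgeSet) = P1.X := if_pos rfl
        rw [h1, h2]; simp [psign]
      · intro e _ hne
        have hval : (e : Sym2 V) ≠ s(l, m) := fun h => hne (Subtype.ext h)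
        by_cases he : (e : Sym2 V) = s(i, l)
        · have hX : fAf G rank i l e = P1.X := if_pos he
          have hI : fAf G rank l m e = P1.I := by
            simp only [fAf]
            rw [if_neg hval, if_neg]
            rintro (⟨h1, h2⟩ | ⟨h1, h2⟩)
            · rw [he] at h2
              exact absurd h2 (not_lt.mpr (le_of_lt hC'))
            · rw [he] at h1
              rcases Sym2.mem_iff.mp h1 with h | h
              · exact hmi h
              · exact hmj h
          rw [hX, hI]; simp [psign]
        · exact psign_ZI (fAf_ZI G rank he) (fAf_ZI G rank hval)

lemma stepA_none {i j l m : V}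
    (hl : ¬(l = i ∨ l = j)) (hm : ¬(m = i ∨ m = j)) :
    ∏ e : ↥G.edgeSet, psign (fAf G rank i j e) (fAf G rank l m e) = 1 := by
  push_neg at hl hm
  apply Finset.prod_eq_one
  intro e _
  by_cases h1 : (e : Sym2 V) = s(i, j)
  · have hX : fAf G rank i j e = P1.X := if_pos h1
    have hI : fAf G rank l m e = P1.I := by
      simp only [fAf]
      rw [if_neg, if_neg]
      · rintro (⟨hmem, _⟩ | ⟨hmem, _⟩)
        · rw [h1] at hmem
          rcases Sym2.mem_iff.mp hmem with h | h
          exacts [hl.1 h, hl.2 h]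
        · rw [h1] at hmem
          rcases Sym2.mem_iff.mp hmem with h | h
          exacts [hm.1 h, hm.2 h]
      · rw [h1]
        intro h
        rcases Sym2.eq_iff.mp h with ⟨hh, _⟩ | ⟨_, hh⟩
        exacts [hl.1 hh.symm, hl.2 hh.symm]
    rw [hX, hI]; simp [psign]
  · by_cases h2 : (e : Sym2 V) = s(l, m)
    · have hX : fAf G rank l m e = P1.X := if_pos h2
      have hI : fAf G rank i j e = P1.I := by
        simp only [fAf]
        rw [if_neg h1, if_neg]
        rintro (⟨hmem, _⟩ | ⟨hmem, _⟩)
        · rw [h2] at hmem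
          rcases Sym2.mem_iff.mp hmem with h | h
          exacts [hl.1 h.symm, hm.1 h.symm]
        · rw [h2] at hmem
          rcases Sym2.mem_iff.mp hmem with h | h
          exacts [hl.2 h.symm, hm.2 h.symm]
      rw [hI, hX]; simp [psign]
    · exact psign_ZI (fAf_ZI G rank h1) (fAf_ZI G rank h2)

lemma stepA {i j l m : V} (hadj : G.Adj i j)
    (hrankj : Set.InjOn (rank j) {e : Sym2 V | e ∈ G.edgeSet ∧ j ∈ e})
    (hmin : ∀ e ∈ G.edgeSet, i ∈ e → e ≠ s(i, j) → rank i s(i, j) < rank i e)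
    (hlm : G.Adj l m) :
    ∏ e : ↥G.edgeSet, psign (fAf G rank i j e) (fAf G rank l m e) =
      if (l = i ∨ l = j) ↔ (m = i ∨ m = j) then 1 else -1 := by
  by_cases hl : l = i ∨ l = j <;> by_cases hm : m = i ∨ m = j
  · rw [if_pos (iff_of_true hl hm)]
    have hfun : fAf G rank l m = fAf G rank i j := by
      have hne : l ≠ m := hlm.ne
      rcases hl with rfl | rfl <;> rcases hm with rfl | rfl
      · exact absurd rfl hne
      · rfl
      · exact fAf_swap G rank l m
      · exact absurd rfl hne
    rw [hfun]
    exact Finset.prod_eq_one fun e _ => psign_self _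
  · rw [if_neg (by tauto)]
    exact stepA_one G rank hadj hrankj hmin hl hm hlm
  · rw [if_neg (by tauto)]
    have := stepA_one G rank hadj hrankj hmin hm hl hlm.symm
    rwa [fAf_swap G rank l m]
  · rw [if_pos (by tauto)]
    exact stepA_none G rank hl hm

lemma stepB {j' l m : V} (hlm : G.Adj l m) :
    ∏ e : ↥G.edgeSet, psign (fBf G j' e) (fAf G rank l m e) =
      if (l = j') ↔ (m = j') then 1 else -1 := by
  have hedm : s(l, m) ∈ G.edgeSet := G.mem_edgeSet.mpr hlm
  by_cases hj : j' = l ∨ j' = m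
  · have hne : ¬((l = j') ↔ (m = j')) := by
      intro h
      rcases hj with rfl | rfl
      · exact hlm.ne (h.mp rfl).symm
      · exact hlm.ne (h.mpr rfl)
    rw [if_neg hne]
    rw [Finset.prod_eq_single_of_mem (⟨s(l, m), hedm⟩ : ↥G.edgeSet)
      (Finset.mem_univ _) ?_]
    · have h1 : fBf G j' (⟨s(l, m), hedm⟩ : ↥G.edgeSet) = P1.Z :=
        if_pos (Sym2.mem_iff.mpr hj)
      have h2 : fAf G rank l m (⟨s(l, m), hedm⟩ : ↥G.edgeSet) = P1.X := if_pos rfl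
      rw [h1, h2]; simp [psign]
    · intro e _ hne'
      exact psign_ZI (fBf_ZI G j' e) (fAf_ZI G rank fun h => hne' (Subtype.ext h))
  · rw [if_pos (by tauto)]
    apply Finset.prod_eq_one
    intro e _
    by_cases he : (e : Sym2 V) = s(l, m)
    · have h1 : fBf G j' e = P1.I := by
        simp only [fBf]
        rw [if_neg]
        rw [he]
        exact fun h => hj (Sym2.mem_iff.mp h)
      have h2 : fAf G rank l m e = P1.X := if_pos he
      rw [h1, h2]; simp [psign]
    · exact psign_ZI (fBf_ZI G j' e) (fAf_ZI G rank he)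

lemma antiAB {i j : V} (hadj : G.Adj i j)
    (hmin : ∀ e ∈ G.edgeSet, i ∈ e → e ≠ s(i, j) → rank i s(i, j) < rank i e) :
    ∏ e : ↥G.edgeSet, psign (fAf G rank i j e) (fBf G i e) = -1 := by
  have he0 : s(i, j) ∈ G.edgeSet := G.mem_edgeSet.mpr hadj
  rw [Finset.prod_eq_single_of_mem (⟨s(i, j), he0⟩ : ↥G.edgeSet)
    (Finset.mem_univ _) ?_]
  · have h1 : fAf G rank i j (⟨s(i, j), he0⟩ : ↥G.edgeSet) = P1.X := if_pos rfl
    have h2 : fBf G i (⟨s(i, j), he0⟩ : ↥G.edgeSet) = P1.Z :=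
      if_pos (Sym2.mem_iff.mpr (Or.inl rfl))
    rw [h1, h2]; simp [psign]
  · intro e _ hne
    exact psign_ZI (fAf_ZI G rank fun h => hne (Subtype.ext h)) (fBf_ZI G i e)

lemma commBB (j' i' : V) :
    ∏ e : ↥G.edgeSet, psign (fBf G j' e) (fBf G i' e) = 1 :=
  Finset.prod_eq_one fun e _ => psign_ZI (fBf_ZI G j' e) (fBf_ZI G i' e)

/-- Generic list-product commutation. -/
lemma mul_listProd {n : Type*} [Fintype n] [DecidableEq n]
    (X : Matrix n n ℂ) (A : ℕ → Matrix n n ℂ) (σ : ℕ → ℂ) (s : ℕ)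
    (h : ∀ t < s, X * A t = σ t • (A t * X)) :
    X * ((List.range s).map A).prod =
      (∏ t ∈ Finset.range s, σ t) • (((List.range s).map A).prod * X) := by
  induction s with
  | zero => simp
  | succ n ih =>
    rw [List.range_succ, List.map_append, List.prod_append, List.map_singleton,
      List.prod_singleton, Finset.prod_range_succ]
    have ih' := ih fun t ht => h t (Nat.lt_succ_of_lt ht)
    calc X * (((List.range n).map A).prod * A n)
        = (X * ((List.range n).map A).prod) * A n := by rw [mul_assoc]
      _ = ((∏ t ∈ Finset.range n, σ t) • (((List.range n).map A).prod * X)) * A n := by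
          rw [ih']
      _ = (∏ t ∈ Finset.range n, σ t) • (((List.range n).map A).prod * (X * A n)) := by
          rw [Matrix.smul_mul, mul_assoc]
      _ = (∏ t ∈ Finset.range n, σ t) •
            (((List.range n).map A).prod * (σ n • (A n * X))) := by
          rw [h n (Nat.lt_succ_self n)]
      _ = ((∏ t ∈ Finset.range n, σ t) * σ n) •
            (((List.range n).map A).prod * A n * X) := by
          rw [Matrix.mul_smul, smul_smul, mul_assoc]

/-- The closed-walk parity lemma. -/
lemma prod_telescope_sq (h : ℕ → ℂ) (hpm : ∀ t, h t = 1 ∨ h t = -1) (s : ℕ)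
    (hclose : h s = h 0) :
    ∏ t ∈ Finset.range s, (h t * h (t + 1)) = 1 := by
  rw [Finset.prod_mul_distrib]
  have key : ∏ t ∈ Finset.range s, h (t + 1) = ∏ t ∈ Finset.range s, h t := by
    cases s with
    | zero => rfl
    | succ n =>
      rw [Finset.prod_range_succ (fun t => h (t + 1)), Finset.prod_range_succ' h]
      rw [hclose]
  rw [key, ← Finset.prod_mul_distrib]
  apply Finset.prod_eq_one
  intro t _
  rcases hpm t with ht | ht <;> rw [ht] <;> ring

/-- Commutation with a loop operator, given a step-sign rule. -/
lemma comm_loop (eps : V → V → ℂ) (f0 : ↥G.edgeSet → P1) (cond : V → Prop)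
    [DecidablePred cond]
    (hstep : ∀ l m, G.Adj l m →
      ∏ e : ↥G.edgeSet, psign (f0 e) (fAf G rank l m e) =
        if cond l ↔ cond m then 1 else -1)
    (s : ℕ) (ζ : ℕ → V) (hζ : IsLoopIn G s ζ) :
    PauliMatrix f0 * loopOpSF G rank eps s ζ =
      loopOpSF G rank eps s ζ * PauliMatrix f0 := by
  obtain ⟨hclose, hadjs⟩ := hζ
  set h : ℕ → ℂ := fun t => if cond (ζ t) then 1 else -1 with hh
  have hstep' : ∀ t < s, PauliMatrix f0 * AtSF G rank eps (ζ t) (ζ (t + 1)) =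
      (h t * h (t + 1)) • (AtSF G rank eps (ζ t) (ζ (t + 1)) * PauliMatrix f0) := by
    intro t ht
    have hσ : ∏ e : ↥G.edgeSet, psign (f0 e) (fAf G rank (ζ t) (ζ (t + 1)) e) =
        h t * h (t + 1) := by
      rw [hstep _ _ (hadjs t ht), hh]
      by_cases h1 : cond (ζ t) <;> by_cases h2 : cond (ζ (t + 1)) <;>
        simp [h1, h2] <;> ring
    rw [AtSF_eq, mul_smul_comm, PauliMatrix_comm, hσ, smul_comm,
      Matrix.smul_mul]
  have hmain := mul_listProd (PauliMatrix f0)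
    (fun t => AtSF G rank eps (ζ t) (ζ (t + 1))) (fun t => h t * h (t + 1)) s hstep'
  have hone : ∏ t ∈ Finset.range s, (h t * h (t + 1)) = 1 := by
    apply prod_telescope_sq h (fun t => by by_cases hc : cond (ζ t) <;> simp [hh, hc]) s
    rw [hh]
    simp only [hclose]
  rw [hone, one_smul] at hmain
  rw [loopOpSF, mul_smul_comm, hmain, Matrix.smul_mul]

lemma comm_stab (eps : V → V → ℂ) (X : Matrix (↥G.edgeSet → Bool) (↥G.edgeSet → Bool) ℂ)
    (hX : ∀ s ζ, IsLoopIn G s ζ →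
      X * loopOpSF G rank eps s ζ = loopOpSF G rank eps s ζ * X) :
    ∀ M ∈ stabSF G rank eps, X * M = M * X := by
  intro M hM
  induction hM using Submonoid.closure_induction with
  | mem x hx => obtain ⟨s, ζ, hζ, rfl⟩ := hx; exact hX s ζ hζ
  | one => simp
  | mul x y hx hy ihx ihy => rw [← mul_assoc, ihx, mul_assoc, ihy, ← mul_assoc]

lemma logical_of (rank : V → Sym2 V → ℕ) (eps : V → V → ℂ) (i : V)
    (c : ℂ) (f : ↥G.edgeSet → P1) (hc : c ≠ 0)
    (W : Matrix (↥G.edgeSet → Bool) (↥G.edgeSet → Bool) ℂ)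
    (hEq : W = c • PauliMatrix f)
    (hWcomm : ∀ M ∈ stabSF G rank eps, W * M = M * W)
    (hanti : W * BtSF G i = -(BtSF G i * W))
    (hBicomm : ∀ M ∈ stabSF G rank eps, BtSF G i * M = M * BtSF G i) :
    IsLogicalSF G rank eps c f := by
  constructor
  · intro M hM
    rw [← hEq]
    exact hWcomm M hM
  · rintro ⟨c', M, hM, hEq'⟩
    have hWM : W = c' • M := hEq.trans hEq'
    have h1 : BtSF G i * W = W * BtSF G i := by
      rw [hWM, Matrix.smul_mul, Matrix.mul_smul, hBicomm M hM]
    have h3 : BtSF G i * W = -(BtSF G i * W) := h1.trans hanti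
    have hz : BtSF G i * W = 0 := by
      have h5 : (2 : ℂ) • (BtSF G i * W) = 0 := by
        rw [two_smul]
        nth_rewrite 2 [h3]
        exact add_neg_cancel _
      rcases smul_eq_zero.mp h5 with h | h
      · exact absurd h two_ne_zero
      · exact h
    have hW0 : W = 0 := by
      have h4 : BtSF G i * (BtSF G i * W) = 0 := by rw [hz, mul_zero]
      rwa [← mul_assoc, BtSF_eq, PauliMatrix_sq, one_mul] at h4
    rw [hEq] at hW0
    rcases smul_eq_zero.mp hW0 with h | h
    · exact hc h
    · exact PauliMatrix_ne_zero f h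

lemma card_incident (j : V) :
    (Finset.univ.filter fun e : ↥G.edgeSet => j ∈ (e : Sym2 V)).card = G.degree j := by
  rw [← SimpleGraph.card_incidenceFinset_eq_degree]
  refine Finset.card_bij (fun e (_ : e ∈ Finset.univ.filter
    fun e : ↥G.edgeSet => j ∈ (e : Sym2 V)) => (e : Sym2 V)) ?_ ?_ ?_
  · intro e he
    rw [SimpleGraph.mem_incidenceFinset]
    exact ⟨e.prop, (Finset.mem_filter.mp he).2⟩
  · intro a ha b hb hab
    exact Subtype.ext hab
  · intro e he
    rw [SimpleGraph.mem_incidenceFinset] at he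
    exact ⟨⟨e, he.1⟩, Finset.mem_filter.mpr ⟨Finset.mem_univ _, he.2⟩, rfl⟩

end Aux

/-- If `G` contains adjacent vertices `i, j` of degree at most `4` such that `(i,j)` is the
smallest edge incident to `i`, then `Ã_{ij}` or `Ã_{ij} B̃_j` has weight at most `2`;
consequently, if every vertex of `G` has degree at most `4` then the Superfast Encoding
fails to correct all single-qubit errors. -/
theorem stmt10 {V : Type*} [Fintype V] [DecidableEq V] (G : SimpleGraph V)
    [DecidableRel G.Adj] (hconn : G.Connected)
    (rank : V → Sym2 V → ℕ)
    (hrank : ∀ i : V, Set.InjOn (rank i) {e : Sym2 V | e ∈ G.edgeSet ∧ i ∈ e})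
    (eps : V → V → ℂ)
    (heps : ∀ j k, G.Adj j k → (eps j k = 1 ∨ eps j k = -1) ∧ eps k j = - eps j k)
    (i j : V) (hadj : G.Adj i j) (hdi : G.degree i ≤ 4) (hdj : G.degree j ≤ 4)
    (hmin : ∀ e ∈ G.edgeSet, i ∈ e → e ≠ s(i, j) → rank i s(i, j) < rank i e) :
    ((∃ (c : ℂ) (f : ↥G.edgeSet → P1), c ≠ 0 ∧
        AtSF G rank eps i j = c • PauliMatrix f ∧ pweight f ≤ 2) ∨
     (∃ (c : ℂ) (f : ↥G.edgeSet → P1), c ≠ 0 ∧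
        AtSF G rank eps i j * BtSF G j = c • PauliMatrix f ∧ pweight f ≤ 2)) ∧
    ((∀ v : V, G.degree v ≤ 4) →
      ∃ (c : ℂ) (f : ↥G.edgeSet → P1), c ≠ 0 ∧ pweight f ≤ 2 ∧
        IsLogicalSF G rank eps c f) := by
  classical
  obtain ⟨heps1, -⟩ := heps i j hadj
  have hepsne : eps i j ≠ 0 := by rcases heps1 with h | h <;> rw [h] <;> norm_num
  have he0 : s(i, j) ∈ G.edgeSet := G.mem_edgeSet.mpr hadj
  have hj_e0 : j ∈ s(i, j) := Sym2.mem_iff.mpr (Or.inr rfl)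
  set e0 : ↥G.edgeSet := (⟨s(i, j), he0⟩ : ↥G.edgeSet) with he0def
  set Tall : Finset ↥G.edgeSet :=
    Finset.univ.filter (fun e => j ∈ (e : Sym2 V)) with hTall
  set Sj : Finset ↥G.edgeSet := Finset.univ.filter
    (fun e => j ∈ (e : Sym2 V) ∧ rank j (e : Sym2 V) < rank j s(i, j)) with hSjdef
  have he0T : e0 ∈ Tall := Finset.mem_filter.mpr ⟨Finset.mem_univ _, hj_e0⟩
  have hTcard : Tall.card ≤ 4 := by rw [hTall, Aux.card_incident]; exact hdj
  have hSsub : Sj ⊆ Tall.erase e0 := by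
    intro e he
    obtain ⟨-, h1, h2⟩ := Finset.mem_filter.mp he
    refine Finset.mem_erase.mpr ⟨?_, Finset.mem_filter.mpr ⟨Finset.mem_univ _, h1⟩⟩
    intro hcontra
    rw [hcontra] at h2
    exact lt_irrefl _ h2
  have hT'card : (Tall.erase e0).card ≤ 3 := by
    rw [Finset.card_erase_of_mem he0T]; omega
  have hsuppA : ∀ e, Aux.fAf G rank i j e ≠ P1.I → e = e0 ∨ e ∈ Sj := by
    intro e he
    by_cases hv : (e : Sym2 V) = s(i, j)
    · exact Or.inl (Subtype.ext hv)
    · right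
      simp only [Aux.fAf] at he
      rw [if_neg hv] at he
      by_cases hcond : (i ∈ (e : Sym2 V) ∧ rank i (e : Sym2 V) < rank i s(i, j)) ∨
          (j ∈ (e : Sym2 V) ∧ rank j (e : Sym2 V) < rank j s(i, j))
      · rcases hcond with ⟨h1, h2⟩ | ⟨h1, h2⟩
        · exact absurd h2 (not_lt.mpr (le_of_lt (hmin _ e.prop h1 hv)))
        · exact Finset.mem_filter.mpr ⟨Finset.mem_univ _, h1, h2⟩
      · rw [if_neg hcond] at he
        exact absurd rfl he
  have hsuppAB : ∀ e, Aux.pmul (Aux.fAf G rank i j e) (Aux.fBf G j e) ≠ P1.I →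
      e = e0 ∨ e ∈ (Tall.erase e0) \ Sj := by
    intro e he
    by_cases hv : (e : Sym2 V) = s(i, j)
    · exact Or.inl (Subtype.ext hv)
    · right
      by_cases hj2 : j ∈ (e : Sym2 V)
      · by_cases hlt : rank j (e : Sym2 V) < rank j s(i, j)
        · exfalso
          have h1 : Aux.fAf G rank i j e = P1.Z := by
            simp only [Aux.fAf]
            rw [if_neg hv, if_pos (Or.inr ⟨hj2, hlt⟩)]
          have h2 : Aux.fBf G j e = P1.Z := if_pos hj2
          rw [h1, h2] at he
          exact he rfl
        · refine Finset.mem_sdiff.mpr ⟨Finset.mem_erase.mpr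
            ⟨fun hh => hv (congrArg Subtype.val hh),
             Finset.mem_filter.mpr ⟨Finset.mem_univ _, hj2⟩⟩, ?_⟩
          intro hmem
          exact hlt (Finset.mem_filter.mp hmem).2.2
      · exfalso
        have h1 : Aux.fAf G rank i j e = P1.I := by
          simp only [Aux.fAf]
          rw [if_neg hv, if_neg]
          rintro (⟨h1, h2⟩ | ⟨h1, h2⟩)
          · exact absurd h2 (not_lt.mpr (le_of_lt (hmin _ e.prop h1 hv)))
          · exact hj2 h1
        have h2 : Aux.fBf G j e = P1.I := if_neg hj2
        rw [h1, h2] at he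
        exact he rfl
  have part1 : (∃ (c : ℂ) (f : ↥G.edgeSet → P1), c ≠ 0 ∧
        AtSF G rank eps i j = c • PauliMatrix f ∧ pweight f ≤ 2) ∨
      (∃ (c : ℂ) (f : ↥G.edgeSet → P1), c ≠ 0 ∧
        AtSF G rank eps i j * BtSF G j = c • PauliMatrix f ∧ pweight f ≤ 2) := by
    by_cases hk : Sj.card ≤ 1
    · refine Or.inl ⟨eps i j, Aux.fAf G rank i j, hepsne, Aux.AtSF_eq G rank eps i j, ?_⟩
      have hsub : Finset.univ.filter (fun e => Aux.fAf G rank i j e ≠ P1.I) ⊆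
          insert e0 Sj := by
        intro e he
        exact Finset.mem_insert.mpr (hsuppA e (Finset.mem_filter.mp he).2)
      calc pweight (Aux.fAf G rank i j)
          ≤ (insert e0 Sj).card := Finset.card_le_card hsub
        _ ≤ Sj.card + 1 := Finset.card_insert_le _ _
        _ ≤ 2 := by omega
    · push_neg at hk
      refine Or.inr ⟨eps i j * ∏ e : ↥G.edgeSet,
        Aux.pphase (Aux.fAf G rank i j e) (Aux.fBf G j e),
        fun e => Aux.pmul (Aux.fAf G rank i j e) (Aux.fBf G j e),
        mul_ne_zero hepsne (Finset.prod_ne_zero_iff.mpr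
          fun q _ => Aux.pphase_ne_zero _ _), ?_, ?_⟩
      · rw [Aux.AtSF_eq, Aux.BtSF_eq, Matrix.smul_mul, Aux.PauliMatrix_mul, smul_smul]
      · have hsub : Finset.univ.filter
            (fun e => Aux.pmul (Aux.fAf G rank i j e) (Aux.fBf G j e) ≠ P1.I) ⊆
            insert e0 ((Tall.erase e0) \ Sj) := by
          intro e he
          exact Finset.mem_insert.mpr (hsuppAB e (Finset.mem_filter.mp he).2)
        have hcs : Sj.card ≤ (Tall.erase e0).card := Finset.card_le_card hSsub
        calc pweight (fun e => Aux.pmul (Aux.fAf G rank i j e) (Aux.fBf G j e))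
            ≤ (insert e0 ((Tall.erase e0) \ Sj)).card := Finset.card_le_card hsub
          _ ≤ ((Tall.erase e0) \ Sj).card + 1 := Finset.card_insert_le _ _
          _ = ((Tall.erase e0).card - Sj.card) + 1 := by rw [Finset.card_sdiff_of_subset hSsub]
          _ ≤ 2 := by omega
  refine ⟨part1, fun _ => ?_⟩
  -- commutation with all loop operators
  have hBiloop : ∀ s ζ, IsLoopIn G s ζ →
      BtSF G i * loopOpSF G rank eps s ζ = loopOpSF G rank eps s ζ * BtSF G i := by
    intro s ζ hζ
    rw [Aux.BtSF_eq]
    exact Aux.comm_loop G rank eps (Aux.fBf G i) (fun v => v = i)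
      (fun l m hlm => Aux.stepB G rank hlm) s ζ hζ
  have hBjloop : ∀ s ζ, IsLoopIn G s ζ →
      BtSF G j * loopOpSF G rank eps s ζ = loopOpSF G rank eps s ζ * BtSF G j := by
    intro s ζ hζ
    rw [Aux.BtSF_eq]
    exact Aux.comm_loop G rank eps (Aux.fBf G j) (fun v => v = j)
      (fun l m hlm => Aux.stepB G rank hlm) s ζ hζ
  have hAloop : ∀ s ζ, IsLoopIn G s ζ →
      AtSF G rank eps i j * loopOpSF G rank eps s ζ =
        loopOpSF G rank eps s ζ * AtSF G rank eps i j := by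
    intro s ζ hζ
    have hcomm := Aux.comm_loop G rank eps (Aux.fAf G rank i j)
      (fun v => v = i ∨ v = j)
      (fun l m hlm => Aux.stepA G rank hadj (hrank j) hmin hlm) s ζ hζ
    rw [Aux.AtSF_eq, Matrix.smul_mul, hcomm, Matrix.mul_smul]
  have hBicomm := Aux.comm_stab G rank eps (BtSF G i) hBiloop
  have hABi : AtSF G rank eps i j * BtSF G i = -(BtSF G i * AtSF G rank eps i j) := by
    rw [Aux.AtSF_eq, Aux.BtSF_eq, Matrix.smul_mul, Aux.PauliMatrix_comm,
      Aux.antiAB G rank hadj hmin, Matrix.mul_smul, smul_smul, mul_neg_one, neg_smul]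
  rcases part1 with ⟨c, f, hc, hEq, hw⟩ | ⟨c, f, hc, hEq, hw⟩
  · refine ⟨c, f, hc, hw, Aux.logical_of G rank eps i c f hc _ hEq ?_ hABi hBicomm⟩
    exact Aux.comm_stab G rank eps _ hAloop
  · refine ⟨c, f, hc, hw, Aux.logical_of G rank eps i c f hc _ hEq ?_ ?_ hBicomm⟩
    · exact Aux.comm_stab G rank eps _ (fun s ζ hζ => by
        rw [mul_assoc, hBjloop s ζ hζ, ← mul_assoc, hAloop s ζ hζ, mul_assoc])
    · have hBB : BtSF G j * BtSF G i = BtSF G i * BtSF G j := by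
        rw [Aux.BtSF_eq G j, Aux.BtSF_eq G i, Aux.PauliMatrix_comm,
          Aux.commBB, one_smul]
      calc AtSF G rank eps i j * BtSF G j * BtSF G i
          = AtSF G rank eps i j * (BtSF G j * BtSF G i) := mul_assoc _ _ _
        _ = AtSF G rank eps i j * (BtSF G i * BtSF G j) := by rw [hBB]
        _ = (AtSF G rank eps i j * BtSF G i) * BtSF G j := (mul_assoc _ _ _).symm
        _ = (-(BtSF G i * AtSF G rank eps i j)) * BtSF G j := by rw [hABi]
        _ = -(BtSF G i * (AtSF G rank eps i j * BtSF G j)) := by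
            rw [neg_mul, mul_assoc]
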